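/- Let σ₁ and σ₂ be protagonist strategies in an initialized generalised safety/reachability game. Then σ₁ is not weakly dominated by σ₂ (i.e., not σ₁ ⪯ σ₂) if and only if there exists a history h, compatible with both σ₁ and σ₂, such that last(h) ∈ V_P, σ₁(h) ≠ σ₂(h), and cVal(h, σ₁) > aVal(h, σ₂). -/

import Mathlib

open scoped Classical

/-- A generalised safety/reachability game: a finite directed graph where every vertex has a
successor, a set `protag` of protagonist vertices (the rest belong to the antagonist), a set
`leaf` of leaves (each equipped with exactly a self-loop), an integer payoff attached to each
leaf, and an initial vertex `v0`. -/
structure GSRGame where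
  V : Type
  fin : Finite V
  E : V → V → Prop
  succ_exists : ∀ v : V, ∃ w : V, E v w
  protag : V → Prop
  leaf : V → Prop
  leaf_loop : ∀ v w : V, leaf v → (E v w ↔ w = v)
  pay : V → ℤ
  v0 : V

namespace GSRGame

variable (g : GSRGame)

/-- A strategy: to each nonempty history it assigns a successor of the last vertex.
(A protagonist strategy is only ever consulted at histories ending in a protagonist vertex,
an antagonist strategy at histories ending in an antagonist vertex.) -/
structure Strat where
  act : List g.V → g.V
  valid : ∀ (h : List g.V) (hne : h ≠ []), g.E (h.getLast hne) (act h)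

/-- One step of the play extending history `h`: the protagonist moves according to `σ` at
protagonist vertices, the antagonist according to `τ` elsewhere. -/
noncomputable def step (σ τ : g.Strat) (h : List g.V) : List g.V :=
  h ++ [if g.protag (h.getLastD g.v0) then σ.act h else τ.act h]

/-- The history obtained after `k` steps of play by `(σ, τ)` extending `h`. -/
noncomputable def playList (σ τ : g.Strat) (h : List g.V) : ℕ → List g.V
  | 0 => h
  | k + 1 => g.step σ τ (playList σ τ h k)

/-- The outcome (infinite path) induced by `(σ, τ)` from the history `h`. -/
noncomputable def play (σ τ : g.Strat) (h : List g.V) (k : ℕ) : g.V :=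
  (g.playList σ τ h k).getLastD g.v0

/-- The payoff of an outcome: the payoff of the leaf it reaches, and `0` if it reaches
no leaf. -/
noncomputable def payoffOf (ρ : ℕ → g.V) : ℤ :=
  if hx : ∃ k : ℕ, g.leaf (ρ k) then g.pay (ρ (Nat.find hx)) else 0

/-- The payoff `p(h, σ, τ)` of the outcome induced by `(σ, τ)` from the history `h`. -/
noncomputable def pval (σ τ : g.Strat) (h : List g.V) : ℤ :=
  g.payoffOf (g.play σ τ h)

/-- `h` is a history (a nonempty path starting at `v0`) compatible with the protagonist
strategy `σ`: every protagonist move along `h` agrees with `σ`. -/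
def Compat (σ : g.Strat) (h : List g.V) : Prop :=
  h ≠ [] ∧ h.head? = some g.v0 ∧ List.Chain' g.E h ∧
    ∀ (p : List g.V) (v : g.V), (p ++ [v]) <+: h → p ≠ [] →
      g.protag (p.getLastD g.v0) → σ.act p = v

/-- The cooperative value `cVal(h, σ)`. -/
noncomputable def cVal (σ : g.Strat) (h : List g.V) : ℤ :=
  sSup {z : ℤ | ∃ τ : g.Strat, z = g.pval σ τ h}

/-- The antagonistic value `aVal(h, σ)`. -/
noncomputable def aVal (σ : g.Strat) (h : List g.V) : ℤ :=
  sInf {z : ℤ | ∃ τ : g.Strat, z = g.pval σ τ h}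

/-- The antagonistic value `aVal(h)` of a history. -/
noncomputable def aValH (h : List g.V) : ℤ :=
  sSup {z : ℤ | ∃ σ : g.Strat, z = g.aVal σ h}

/-- The antagonistic-cooperative value `acVal(h)` of a history. -/
noncomputable def acVal (h : List g.V) : ℤ :=
  sSup {z : ℤ | ∃ σ : g.Strat, g.aValH h ≤ g.aVal σ h ∧ z = g.cVal σ h}

/-- Weak dominance `σ ⪯ σ'` (from the initial vertex `v0`). -/
def Dom (σ σ' : g.Strat) : Prop :=
  ∀ τ : g.Strat, g.pval σ τ [g.v0] ≤ g.pval σ' τ [g.v0]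

/-- Dominance `σ ≺ σ'`. -/
def SDom (σ σ' : g.Strat) : Prop :=
  g.Dom σ σ' ∧ ∃ τ : g.Strat, g.pval σ τ [g.v0] < g.pval σ' τ [g.v0]

/-- Admissibility: `σ` is dominated by no strategy. -/
def Admissible (σ : g.Strat) : Prop := ¬ ∃ σ' : g.Strat, g.SDom σ σ'

/-- `h` is a witness of non-dominance of `σ₁` by `σ₂`. -/
def NonDomWitness (σ₁ σ₂ : g.Strat) (h : List g.V) : Prop :=
  g.Compat σ₁ h ∧ g.Compat σ₂ h ∧ g.protag (h.getLastD g.v0) ∧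
    σ₁.act h ≠ σ₂.act h ∧ g.aVal σ₂ h < g.cVal σ₁ h

/-- `h` is a witness of non-admissibility of `σ`. -/
def NonAdmWitness (σ : g.Strat) (h : List g.V) : Prop :=
  g.Compat σ h ∧
    g.aVal σ h ≤ g.cVal σ h ∧ g.cVal σ h ≤ g.aValH h ∧ g.aValH h ≤ g.acVal h ∧
    (g.aVal σ h < g.cVal σ h ∨ g.cVal σ h < g.aValH h ∨ g.aValH h < g.acVal h)

/-! ### Auxiliary lemmas -/

section Aux

lemma list_getLastD_concat {α} (l : List α) (x d : α) : (l ++ [x]).getLastD d = x := by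
  rw [List.getLastD_eq_getLast?, List.getLast?_concat]; rfl

lemma list_getLastD_eq_getLast {α} (l : List α) (d : α) (h : l ≠ []) :
    l.getLastD d = l.getLast h := by
  rw [List.getLastD_eq_getLast?, List.getLast?_eq_getLast h]; rfl

lemma list_prefix_concat {α} {s t : List α} {x : α} (h : s <+: t ++ [x]) :
    s <+: t ∨ s = t ++ [x] := by
  obtain ⟨r, hr⟩ := h
  rcases List.eq_nil_or_concat r with rfl | ⟨r', y, rfl⟩
  · right; simpa using hr
  · left
    have h1 : (s ++ r') ++ [y] = t ++ [x] := by
      simpa [List.concat_eq_append, List.append_assoc] using hr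
    have h2 := congrArg List.dropLast h1
    simp only [List.dropLast_concat] at h2
    exact ⟨r', h2⟩

variable {g : GSRGame}

/-- Some strategy always exists. -/
noncomputable def someStrat (g : GSRGame) : g.Strat where
  act l := Classical.choose (g.succ_exists (l.getLastD g.v0))
  valid l hne := by
    have h2 : l.getLast hne = l.getLastD g.v0 := (list_getLastD_eq_getLast l g.v0 hne).symm
    rw [h2]
    exact Classical.choose_spec (g.succ_exists (l.getLastD g.v0))

lemma pset_nonempty (σ : g.Strat) (h : List g.V) :
    {z : ℤ | ∃ τ : g.Strat, z = g.pval σ τ h}.Nonempty :=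
  ⟨g.pval σ (someStrat g) h, someStrat g, rfl⟩

lemma pset_finite (σ : g.Strat) (h : List g.V) :
    {z : ℤ | ∃ τ : g.Strat, z = g.pval σ τ h}.Finite := by
  have : Finite g.V := g.fin
  apply Set.Finite.subset ((Set.finite_range g.pay).insert 0)
  rintro z ⟨τ, rfl⟩
  unfold GSRGame.pval GSRGame.payoffOf
  split
  · exact Set.mem_insert_iff.2 (Or.inr ⟨_, rfl⟩)
  · exact Set.mem_insert _ _

lemma exists_pval_eq_cVal (σ : g.Strat) (h : List g.V) :
    ∃ τ : g.Strat, g.cVal σ h = g.pval σ τ h :=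
  (pset_nonempty σ h).csSup_mem (pset_finite σ h)

lemma pval_le_cVal (σ τ : g.Strat) (h : List g.V) : g.pval σ τ h ≤ g.cVal σ h :=
  le_csSup (pset_finite σ h).bddAbove ⟨τ, rfl⟩

lemma exists_pval_eq_aVal (σ : g.Strat) (h : List g.V) :
    ∃ τ : g.Strat, g.aVal σ h = g.pval σ τ h :=
  (pset_nonempty σ h).csInf_mem (pset_finite σ h)

lemma aVal_le_pval (σ τ : g.Strat) (h : List g.V) : g.aVal σ h ≤ g.pval σ τ h :=
  csInf_le (pset_finite σ h).bddBelow ⟨τ, rfl⟩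

lemma playList_succ (σ τ : g.Strat) (h0 : List g.V) (k : ℕ) :
    g.playList σ τ h0 (k + 1) = g.playList σ τ h0 k ++
      [if g.protag ((g.playList σ τ h0 k).getLastD g.v0) then σ.act (g.playList σ τ h0 k)
        else τ.act (g.playList σ τ h0 k)] := rfl

lemma playList_ne_nil (σ τ : g.Strat) {h0 : List g.V} (hne : h0 ≠ []) (k : ℕ) :
    g.playList σ τ h0 k ≠ [] := by
  induction k with
  | zero => exact hne
  | succ k ih => rw [playList_succ]; simp

lemma playList_add (σ τ : g.Strat) (h0 : List g.V) (n k : ℕ) :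
    g.playList σ τ h0 (n + k) = g.playList σ τ (g.playList σ τ h0 n) k := by
  induction k with
  | zero => rfl
  | succ k ih => rw [← Nat.add_assoc, playList_succ, playList_succ, ih]

lemma play_succ (σ τ : g.Strat) (h0 : List g.V) (k : ℕ) :
    g.play σ τ h0 (k + 1) =
      (if g.protag ((g.playList σ τ h0 k).getLastD g.v0) then σ.act (g.playList σ τ h0 k)
        else τ.act (g.playList σ τ h0 k)) := by
  rw [GSRGame.play, playList_succ, list_getLastD_concat]

lemma play_absorb (σ τ : g.Strat) {h0 : List g.V} (hne : h0 ≠ []) (k : ℕ)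
    (hl : g.leaf (g.play σ τ h0 k)) : g.play σ τ h0 (k + 1) = g.play σ τ h0 k := by
  have hnn := playList_ne_nil σ τ hne k
  rw [play_succ]
  have hlast : (g.playList σ τ h0 k).getLastD g.v0 = (g.playList σ τ h0 k).getLast hnn :=
    list_getLastD_eq_getLast _ _ hnn
  have hplay : g.play σ τ h0 k = (g.playList σ τ h0 k).getLast hnn := hlast
  split
  · have := σ.valid (g.playList σ τ h0 k) hnn
    rw [← hplay] at this
    rw [(g.leaf_loop _ _ hl).1 this, hplay]
  · have := τ.valid (g.playList σ τ h0 k) hnn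
    rw [← hplay] at this
    rw [(g.leaf_loop _ _ hl).1 this, hplay]

lemma play_absorb' (σ τ : g.Strat) {h0 : List g.V} (hne : h0 ≠ []) {k m : ℕ}
    (hl : g.leaf (g.play σ τ h0 k)) (hkm : k ≤ m) : g.play σ τ h0 m = g.play σ τ h0 k := by
  induction m, hkm using Nat.le_induction with
  | base => rfl
  | succ m hm ih => rw [play_absorb σ τ hne m (ih ▸ hl), ih]

lemma payoff_shift (ρ : ℕ → g.V)
    (hab : ∀ k m, g.leaf (ρ k) → k ≤ m → ρ m = ρ k) (n : ℕ) :
    g.payoffOf (fun k => ρ (n + k)) = g.payoffOf ρ := by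
  unfold GSRGame.payoffOf
  split_ifs with h1 h2 h2
  · have hm2 := Nat.find_spec h2
    have hle : Nat.find h2 ≤ n + Nat.find h1 := Nat.find_le (Nat.find_spec h1)
    show g.pay (ρ (n + Nat.find h1)) = g.pay (ρ (Nat.find h2))
    rw [hab (Nat.find h2) (n + Nat.find h1) hm2 hle]
  · exact absurd ⟨n + Nat.find h1, Nat.find_spec h1⟩ h2
  · exfalso
    obtain ⟨m, hm⟩ := h2
    rcases le_total m n with hc | hc
    · refine h1 ⟨0, ?_⟩
      show g.leaf (ρ (n + 0))
      rw [show n + 0 = n from rfl, hab m n hm hc]; exact hm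
    · refine h1 ⟨m - n, ?_⟩
      show g.leaf (ρ (n + (m - n)))
      rw [Nat.add_sub_cancel' hc]; exact hm
  · rfl

lemma pval_shift (σ τ : g.Strat) {h0 : List g.V} (hne : h0 ≠ []) (n : ℕ) :
    g.pval σ τ (g.playList σ τ h0 n) = g.pval σ τ h0 := by
  unfold GSRGame.pval
  have hfun : g.play σ τ (g.playList σ τ h0 n) = fun k => g.play σ τ h0 (n + k) := by
    funext k
    unfold GSRGame.play
    rw [playList_add]
  rw [hfun]
  exact payoff_shift _ (fun k m hl hkm => play_absorb' σ τ hne hl hkm) n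

/-- From the start `[v0]`, every playList is `v0` followed by a tail. -/
lemma playList_cons (σ τ : g.Strat) (k : ℕ) :
    ∃ t : List g.V, g.playList σ τ [g.v0] k = g.v0 :: t := by
  induction k with
  | zero => exact ⟨[], rfl⟩
  | succ k ih =>
    obtain ⟨t, ht⟩ := ih
    rw [playList_succ, ht]
    exact ⟨t ++ [if g.protag ((g.v0 :: t).getLastD g.v0) then σ.act (g.v0 :: t)
      else τ.act (g.v0 :: t)], rfl⟩

lemma playList_chain (σ τ : g.Strat) {h0 : List g.V} (hne : h0 ≠ [])
    (hc : List.Chain' g.E h0) (k : ℕ) : List.Chain' g.E (g.playList σ τ h0 k) := by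
  induction k with
  | zero => exact hc
  | succ k ih =>
    have hnn := playList_ne_nil σ τ hne k
    rw [playList_succ]; show List.IsChain _ _; rw [List.isChain_append]
    refine ⟨ih, List.isChain_singleton _, ?_⟩
    intro x hx y hy
    rw [List.getLast?_eq_getLast hnn, Option.mem_some_iff] at hx
    simp only [List.head?_cons, Option.mem_some_iff] at hy
    subst hx; subst hy
    split
    · exact σ.valid _ hnn
    · exact τ.valid _ hnn

/-- Protagonist moves along a playList agree with the protagonist strategy. -/
lemma playList_compat_act (σ τ : g.Strat) {h0 : List g.V} (k : ℕ)
    {p : List g.V} {v : g.V} (hpre : p ++ [v] <+: g.playList σ τ h0 k)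
    (hnpre : ¬ (p ++ [v] <+: h0)) (hp : p ≠ []) (hprot : g.protag (p.getLastD g.v0)) :
    σ.act p = v := by
  induction k with
  | zero => exact absurd hpre hnpre
  | succ k ih =>
    rw [playList_succ] at hpre
    rcases list_prefix_concat hpre with hpre' | heq
    · exact ih hpre'
    · obtain ⟨hpl, hv⟩ := List.append_inj' heq rfl
      subst hpl
      rw [List.cons.injEq] at hv
      rw [if_pos hprot] at hv
      exact hv.1.symm

lemma compat_playList (σ τ : g.Strat) (k : ℕ) : g.Compat σ (g.playList σ τ [g.v0] k) := by
  obtain ⟨t, ht⟩ := playList_cons σ τ (g := g) k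
  refine ⟨playList_ne_nil σ τ (by simp) k, by simp [ht],
    playList_chain σ τ (by simp) (List.isChain_singleton _) k, ?_⟩
  intro p v hpre hp hprot
  refine playList_compat_act σ τ k hpre ?_ hp hprot
  intro hcon
  have := hcon.length_le
  simp only [List.length_append, List.length_singleton] at this
  have : p.length = 0 := by omega
  exact hp (List.length_eq_zero_iff.1 this)

/-- Two antagonist strategies agreeing above `h ++ [σ.act h]` give the same plays from `h`. -/
lemma playList_agree (σ τ τ' : g.Strat) {h : List g.V}
    (hprot : g.protag (h.getLastD g.v0))
    (hagree : ∀ l : List g.V, (h ++ [σ.act h]) <+: l → τ.act l = τ'.act l) (k : ℕ) :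
    g.playList σ τ h k = g.playList σ τ' h k ∧
      (1 ≤ k → (h ++ [σ.act h]) <+: g.playList σ τ h k) := by
  induction k with
  | zero => exact ⟨rfl, by omega⟩
  | succ k ih =>
    obtain ⟨heq, hpre⟩ := ih
    rcases Nat.eq_zero_or_pos k with rfl | hk
    · constructor
      · show h ++ [if g.protag (h.getLastD g.v0) then σ.act h else τ.act h] =
          h ++ [if g.protag (h.getLastD g.v0) then σ.act h else τ'.act h]
        rw [if_pos hprot, if_pos hprot]
      · intro _
        show (h ++ [σ.act h]) <+:
          h ++ [if g.protag (h.getLastD g.v0) then σ.act h else τ.act h]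
        rw [if_pos hprot]
    · have hpre' := hpre hk
      constructor
      · rw [playList_succ, playList_succ, ← heq]
        split
        · rfl
        · rw [hagree _ hpre']
      · intro _
        rw [playList_succ]
        exact hpre'.trans (List.prefix_append _ _)

lemma pval_agree (σ τ τ' : g.Strat) {h : List g.V}
    (hprot : g.protag (h.getLastD g.v0))
    (hagree : ∀ l : List g.V, (h ++ [σ.act h]) <+: l → τ.act l = τ'.act l) :
    g.pval σ τ h = g.pval σ τ' h := by
  unfold GSRGame.pval GSRGame.play
  have : ∀ k, g.playList σ τ h k = g.playList σ τ' h k :=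
    fun k => (playList_agree σ τ τ' hprot hagree k).1
  simp only [this]

end Aux

end GSRGame

open GSRGame

/-- `σ₁` is not weakly dominated by `σ₂` iff there is a history `h` compatible
with both, ending in a protagonist vertex, where they disagree and
`cVal(h, σ₁) > aVal(h, σ₂)`. -/
theorem stmt12 (g : GSRGame) (σ₁ σ₂ : g.Strat) :
    ¬ g.Dom σ₁ σ₂ ↔
      ∃ h : List g.V, g.Compat σ₁ h ∧ g.Compat σ₂ h ∧
        g.protag (h.getLastD g.v0) ∧ σ₁.act h ≠ σ₂.act h ∧
        g.aVal σ₂ h < g.cVal σ₁ h := by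
  constructor
  · -- forward direction
    intro hnd
    rw [GSRGame.Dom] at hnd
    push_neg at hnd
    obtain ⟨τ, hτ⟩ := hnd
    have hdiff : ∃ k, g.playList σ₁ τ [g.v0] k ≠ g.playList σ₂ τ [g.v0] k := by
      by_contra hcon
      push_neg at hcon
      have : g.pval σ₁ τ [g.v0] = g.pval σ₂ τ [g.v0] := by
        unfold GSRGame.pval GSRGame.play
        simp only [hcon]
      omega
    have hspec := Nat.find_spec hdiff
    have hn0 : Nat.find hdiff ≠ 0 := by
      intro h0
      rw [h0] at hspec
      exact hspec rfl
    obtain ⟨m, hm⟩ := Nat.exists_eq_succ_of_ne_zero hn0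
    rw [hm] at hspec
    have heqm : g.playList σ₂ τ [g.v0] m = g.playList σ₁ τ [g.v0] m :=
      (not_ne_iff.1 (Nat.find_min hdiff (by omega))).symm
    set h := g.playList σ₁ τ [g.v0] m with hh
    have hprot : g.protag (h.getLastD g.v0) := by
      by_contra hp
      apply hspec
      rw [playList_succ, playList_succ, heqm, if_neg hp, if_neg hp]
    have hne_act : σ₁.act h ≠ σ₂.act h := by
      intro hac
      apply hspec
      rw [playList_succ, playList_succ, heqm, if_pos hprot, if_pos hprot, hac]
    refine ⟨h, compat_playList σ₁ τ m, ?_, hprot, hne_act, ?_⟩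
    · have := compat_playList σ₂ τ m
      rwa [heqm] at this
    · have e1 : g.pval σ₁ τ h = g.pval σ₁ τ [g.v0] :=
        pval_shift σ₁ τ (by simp) m
      have e2 : g.pval σ₂ τ h = g.pval σ₂ τ [g.v0] := by
        have := pval_shift σ₂ τ (h0 := [g.v0]) (by simp) m
        rwa [heqm] at this
      have l1 : g.pval σ₁ τ h ≤ g.cVal σ₁ h := pval_le_cVal σ₁ τ h
      have l2 : g.aVal σ₂ h ≤ g.pval σ₂ τ h := aVal_le_pval σ₂ τ h
      omega
  · -- backward direction
    rintro ⟨h, hc1, hc2, hprot, hact, hval⟩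
    obtain ⟨hne, hhead, hchain, hagree1⟩ := hc1
    obtain ⟨-, -, -, hagree2⟩ := hc2
    obtain ⟨τc, hτc⟩ := exists_pval_eq_cVal σ₁ h
    obtain ⟨τa, hτa⟩ := exists_pval_eq_aVal σ₂ h
    have hchain' := List.isChain_iff_getElem.1 hchain
    have hlenpos : 0 < h.length := List.length_pos_iff.2 hne
    set A := h ++ [σ₁.act h] with hA_def
    let τ : g.Strat :=
      { act := fun l =>
          if A <+: l then τc.act l
          else if hp : l ≠ [] ∧ l <+: h ∧ l.length < h.length then h.get ⟨l.length, hp.2.2⟩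
          else τa.act l
        valid := fun l hl => by
          split_ifs with h1 h2
          · exact τc.valid l hl
          · obtain ⟨-, hpre, hlen⟩ := h2
            have hl1 : 0 < l.length := List.length_pos_iff.2 hl
            have hgl : l.getLast hl = l.get ⟨l.length - 1, by omega⟩ :=
              List.getLast_eq_getElem hl
            have hget : l.get ⟨l.length - 1, by omega⟩ =
                h.get ⟨l.length - 1, by omega⟩ := by
              have := hpre.getElem (show l.length - 1 < l.length by omega)
              simp only [List.get_eq_getElem]
              exact this
            rw [hgl, hget]
            have hcc := hchain' (l.length - 1) (by omega)
            have hee : l.length - 1 + 1 = l.length := by omega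
            simp only [hee] at hcc
            exact hcc
          · exact τa.valid l hl }
    have hτact : ∀ l : List g.V, τ.act l =
        if A <+: l then τc.act l
        else if hp : l ≠ [] ∧ l <+: h ∧ l.length < h.length then h.get ⟨l.length, hp.2.2⟩
        else τa.act l := fun l => rfl
    -- the play from [v0] follows h
    have hA : ∀ (σ : g.Strat), g.Compat σ h → ∀ k, k < h.length →
        g.playList σ τ [g.v0] k = h.take (k + 1) := by
      intro σ hc k hk
      induction k with
      | zero =>
        show [g.v0] = h.take 1
        cases h with
        | nil => exact absurd rfl hne
        | cons a t =>
          simp only [List.head?_cons, Option.some.injEq] at hhead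
          rw [hhead]
          rfl
      | succ k ih =>
        have hk' : k < h.length := by omega
        have ihe := ih hk'
        rw [playList_succ, ihe]
        have hlen : (h.take (k + 1)).length = k + 1 := by
          simp [List.length_take]
          omega
        have hne' : h.take (k + 1) ≠ [] := by
          intro hcon
          have := congrArg List.length hcon
          rw [hlen] at this
          simp at this
        have hgl : (h.take (k + 1)).getLastD g.v0 = h.get ⟨k, hk'⟩ := by
          have htc : h.take (k + 1) = h.take k ++ [h.get ⟨k, hk'⟩] := by
            have := List.take_concat_get hk'
            simpa [List.concat_eq_append] using this.symm
          rw [htc, list_getLastD_concat]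
        have hconcat : h.take (k + 1) ++ [h.get ⟨k + 1, hk⟩] = h.take (k + 2) := by
          have := List.take_concat_get hk
          simpa [List.concat_eq_append] using this
        rw [hgl]
        by_cases hpr : g.protag (h.get ⟨k, hk'⟩)
        · rw [if_pos hpr]
          have hagree := hc.2.2.2 (h.take (k + 1)) (h.get ⟨k + 1, hk⟩)
            (by rw [hconcat]; exact List.take_prefix _ _) hne'
            (by rwa [hgl])
          rw [hagree, hconcat]
        · rw [if_neg hpr, hτact]
          have hnot1 : ¬ (A <+: h.take (k + 1)) := by
            intro hcon
            have := hcon.length_le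
            rw [hA_def, hlen] at this
            simp at this
            omega
          have hcond : h.take (k + 1) ≠ [] ∧ h.take (k + 1) <+: h ∧
              (h.take (k + 1)).length < h.length :=
            ⟨hne', List.take_prefix _ _, by omega⟩
          rw [if_neg hnot1, dif_pos hcond]
          have : h.get ⟨(h.take (k + 1)).length, hcond.2.2⟩ = h.get ⟨k + 1, hk⟩ := by
            congr 1
            simp [hlen]
          rw [this, hconcat]
    have hAh : ∀ (σ : g.Strat), g.Compat σ h →
        g.playList σ τ [g.v0] (h.length - 1) = h := by
      intro σ hc
      have := hA σ hc (h.length - 1) (by omega)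
      rw [this, show h.length - 1 + 1 = h.length by omega, List.take_length]
    -- pval computations
    have hB : ∀ (σ : g.Strat), g.Compat σ h → g.pval σ τ [g.v0] = g.pval σ τ h := by
      intro σ hc
      have := pval_shift σ τ (h0 := [g.v0]) (by simp) (h.length - 1)
      rw [hAh σ hc] at this
      exact this.symm
    have hC : g.pval σ₁ τ h = g.pval σ₁ τc h := by
      refine pval_agree σ₁ τ τc hprot ?_
      intro l hl
      rw [hτact, if_pos hl]
    have hD : g.pval σ₂ τ h = g.pval σ₂ τa h := by
      refine pval_agree σ₂ τ τa hprot ?_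
      intro l hl
      have hlen2 : h.length + 1 ≤ l.length := by
        have := hl.length_le
        simpa using this
      have hnot1 : ¬ (A <+: l) := by
        intro hA1
        have hpp := List.prefix_of_prefix_length_le hA1 hl (by simp [hA_def])
        have heq2 := hpp.eq_of_length (by simp [hA_def])
        rw [hA_def] at heq2
        have := (List.append_inj' heq2 rfl).2
        simp only [List.cons.injEq] at this
        exact hact this.1
      have hnot2 : ¬ (l ≠ [] ∧ l <+: h ∧ l.length < h.length) := by
        rintro ⟨-, -, hcon⟩
        omega
      rw [hτact, if_neg hnot1, dif_neg hnot2]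
    intro hdom
    have hd := hdom τ
    have e1 : g.pval σ₁ τ [g.v0] = g.cVal σ₁ h := by
      rw [hB σ₁ ⟨hne, hhead, hchain, hagree1⟩, hC, ← hτc]
    have e2 : g.pval σ₂ τ [g.v0] = g.aVal σ₂ h := by
      rw [hB σ₂ ⟨hne, hhead, hchain, hagree2⟩, hD, ← hτa]
    omega
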